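/- arXiv:2301.03230 — 4 statements merged into one kernel-verified Lean document; each statement's English description precedes it below -/
import Mathlib

section
/- For the simplicial network G_q(g) (q ≥ 1, g ≥ 0), the number of nodes is N_{g,q} = (2/(q+3)) · ((q+1)(q+2)/2)^{g+1} + 2(q+2)/(q+3). -/
/-- Edge corona product `G ⊛ K_q`: keep `G`, and for each edge of `G` add a fresh
copy of the complete graph on `q` vertices, joining all its vertices to both
endpoints of the edge. -/
def edgeCorona {V : Type} (G : SimpleGraph V) (q : ℕ) :
    SimpleGraph (V ⊕ (G.edgeSet × Fin q)) where
  Adj := fun x y => match x, y with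
    | Sum.inl u, Sum.inl v => G.Adj u v
    | Sum.inl u, Sum.inr p => u ∈ (p.1 : Sym2 V)
    | Sum.inr p, Sum.inl v => v ∈ (p.1 : Sym2 V)
    | Sum.inr p, Sum.inr r => p.1 = r.1 ∧ p.2 ≠ r.2
  symm := by
    constructor
    rintro (u | p) (v | r) h
    · exact G.adj_symm h
    · exact h
    · exact h
    · exact ⟨h.1.symm, h.2.symm⟩
  loopless := by
    constructor
    rintro (u | p) h
    · exact G.irrefl h
    · exact h.2 rfl

-- darts card
lemma dart_count {W : Type} [Finite W] (H : SimpleGraph W) :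
    Nat.card {p : W × W // H.Adj p.1 p.2} = 2 * Nat.card H.edgeSet := by
  classical
  have : Fintype W := Fintype.ofFinite W
  have e : {p : W × W // H.Adj p.1 p.2} ≃ H.Dart :=
    { toFun := fun p => ⟨p.1, p.2⟩
      invFun := fun d => ⟨d.toProd, d.adj⟩
      left_inv := fun p => rfl
      right_inv := fun d => rfl }
  rw [Nat.card_congr e, Nat.card_eq_fintype_card, H.dart_card_eq_twice_card_edges,
    SimpleGraph.edgeFinset, Nat.card_coe_set_eq, Set.ncard_eq_toFinset_card']

-- fiber
lemma mem_edge_card {V : Type} [Finite V] {G : SimpleGraph V} (e : G.edgeSet) :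
    Nat.card {v : V // v ∈ (e : Sym2 V)} = 2 := by
  obtain ⟨s, hs⟩ := e
  induction s with
  | _ a b =>
    have hab : a ≠ b := (G.mem_edgeSet.mp hs).ne
    have eq : {v : V // v ∈ (s(a, b) : Sym2 V)} ≃ ({a, b} : Set V) :=
      Equiv.subtypeEquivRight (by intro v; simp [Sym2.mem_iff])
    rw [Nat.card_congr eq, Nat.card_coe_set_eq, Set.ncard_pair hab]

section
variable {V : Type} (G : SimpleGraph V) (q : ℕ)

/-- classification of ordered adjacent pairs in the edge corona -/
def adjEquiv :
    {p : (V ⊕ (G.edgeSet × Fin q)) × (V ⊕ (G.edgeSet × Fin q)) //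
        (edgeCorona G q).Adj p.1 p.2} ≃
      ({p : V × V // G.Adj p.1 p.2} ⊕
        ({x : (G.edgeSet × Fin q) × V // x.2 ∈ (x.1.1 : Sym2 V)} ⊕
          ({x : (G.edgeSet × Fin q) × V // x.2 ∈ (x.1.1 : Sym2 V)} ⊕
            {x : (G.edgeSet × Fin q) × (G.edgeSet × Fin q) //
              x.1.1 = x.2.1 ∧ x.1.2 ≠ x.2.2}))) where
  toFun := fun x => match x with
    | ⟨(Sum.inl u, Sum.inl v), h⟩ => Sum.inl ⟨(u, v), h⟩
    | ⟨(Sum.inl u, Sum.inr p), h⟩ => Sum.inr (Sum.inl ⟨(p, u), h⟩)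
    | ⟨(Sum.inr p, Sum.inl v), h⟩ => Sum.inr (Sum.inr (Sum.inl ⟨(p, v), h⟩))
    | ⟨(Sum.inr p, Sum.inr r), h⟩ => Sum.inr (Sum.inr (Sum.inr ⟨(p, r), h⟩))
  invFun := fun x => match x with
    | Sum.inl ⟨(u, v), h⟩ => ⟨(Sum.inl u, Sum.inl v), h⟩
    | Sum.inr (Sum.inl ⟨(p, u), h⟩) => ⟨(Sum.inl u, Sum.inr p), h⟩
    | Sum.inr (Sum.inr (Sum.inl ⟨(p, v), h⟩)) => ⟨(Sum.inr p, Sum.inl v), h⟩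
    | Sum.inr (Sum.inr (Sum.inr ⟨(p, r), h⟩)) => ⟨(Sum.inr p, Sum.inr r), h⟩
  left_inv := by rintro ⟨⟨u | p, v | r⟩, h⟩ <;> rfl
  right_inv := by
    rintro (⟨⟨u, v⟩, h⟩ | (⟨⟨p, u⟩, h⟩ | (⟨⟨p, v⟩, h⟩ | ⟨⟨p, r⟩, h⟩))) <;> rfl

def sameCopyEquiv :
    {x : (G.edgeSet × Fin q) × (G.edgeSet × Fin q) //
        x.1.1 = x.2.1 ∧ x.1.2 ≠ x.2.2} ≃
      G.edgeSet × {y : Fin q × Fin q // y.1 ≠ y.2} where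
  toFun := fun ⟨((e, i), (f, j)), h⟩ => (e, ⟨(i, j), h.2⟩)
  invFun := fun (e, ⟨(i, j), h⟩) => ⟨((e, i), (e, j)), rfl, h⟩
  left_inv := by
    rintro ⟨⟨⟨e, i⟩, ⟨f, j⟩⟩, h1, h2⟩
    dsimp at h1
    subst h1
    rfl
  right_inv := by rintro ⟨e, ⟨⟨i, j⟩, h⟩⟩; rfl

lemma offdiag_count : Nat.card {y : Fin q × Fin q // y.1 ≠ y.2} = q * q - q := by
  rw [Nat.card_eq_fintype_card, Fintype.card_subtype]
  have : Finset.univ.filter (fun y : Fin q × Fin q => y.1 ≠ y.2) =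
      (Finset.univ : Finset (Fin q)).offDiag := by
    ext y; simp [Finset.mem_offDiag]
  rw [this, Finset.offDiag_card]
  simp

lemma cross_count [Finite V] :
    Nat.card {x : (G.edgeSet × Fin q) × V // x.2 ∈ (x.1.1 : Sym2 V)} =
      2 * (q * Nat.card G.edgeSet) := by
  classical
  have : Fintype V := Fintype.ofFinite V
  have e1 : {x : (G.edgeSet × Fin q) × V // x.2 ∈ (x.1.1 : Sym2 V)} ≃
      Σ p : G.edgeSet × Fin q, {v : V // v ∈ (p.1 : Sym2 V)} :=
    Equiv.subtypeProdEquivSigmaSubtype (fun (p : G.edgeSet × Fin q) (v : V) => v ∈ (p.1 : Sym2 V))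
  rw [Nat.card_congr e1, Nat.card_eq_fintype_card, Fintype.card_sigma]
  have : ∀ p : G.edgeSet × Fin q, Fintype.card {v : V // v ∈ (p.1 : Sym2 V)} = 2 := by
    intro p
    rw [← Nat.card_eq_fintype_card]
    exact mem_edge_card p.1
  rw [Finset.sum_congr rfl fun p _ => this p, Finset.sum_const, Finset.card_univ,
    Fintype.card_prod, Fintype.card_fin, ← Nat.card_eq_fintype_card]
  ring

lemma corona_edge_count [Finite V] :
    2 * Nat.card (edgeCorona G q).edgeSet = (q + 1) * (q + 2) * Nat.card G.edgeSet := by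
  rw [← dart_count, Nat.card_congr (adjEquiv G q), Nat.card_sum, Nat.card_sum, Nat.card_sum,
    Nat.card_congr (sameCopyEquiv G q), Nat.card_prod, offdiag_count, cross_count,
    dart_count]
  rcases Nat.eq_zero_or_pos q with hq | hq
  · subst hq; simp
  · have h : q ≤ q * q := Nat.le_mul_of_pos_left q hq
    zify [h]
    ring

lemma corona_edge_count_q [Finite V] :
    (Nat.card (edgeCorona G q).edgeSet : ℚ) =
      ((q : ℚ) + 1) * ((q : ℚ) + 2) / 2 * Nat.card G.edgeSet := by
  have h := corona_edge_count G q
  have h2 : ((2 * Nat.card (edgeCorona G q).edgeSet : ℕ) : ℚ) =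
      (((q + 1) * (q + 2) * Nat.card G.edgeSet : ℕ) : ℚ) := by rw [h]
  push_cast at h2
  linarith

end

/-- The simplicial network `G_q(g)` together with its vertex type:
`G_q(0) = K_{q+2}` and `G_q(g+1) = G_q(g) ⊛ K_q`. -/
def Gaux (q : ℕ) : ℕ → Σ V : Type, SimpleGraph V
  | 0 => ⟨Fin (q + 2), ⊤⟩
  | g + 1 => ⟨_, edgeCorona (Gaux q g).2 q⟩

abbrev GVert (q g : ℕ) : Type := (Gaux q g).1

abbrev Gnet (q g : ℕ) : SimpleGraph (GVert q g) := (Gaux q g).2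

/-- The `q+2` hub nodes of `G_q(g)`: the vertices present from iteration `0`. -/
def hub (q : ℕ) : (g : ℕ) → Fin (q + 2) → GVert q g
  | 0 => id
  | g + 1 => fun k => Sum.inl (hub q g k)

instance GVert.finite (q : ℕ) : ∀ g, Finite (GVert q g)
  | 0 => inferInstanceAs (Finite (Fin (q + 2)))
  | g + 1 =>
      haveI := GVert.finite q g
      inferInstanceAs (Finite ((Gaux q g).1 ⊕ ((Gaux q g).2.edgeSet × Fin q)))

lemma M_formula (q : ℕ) : ∀ g : ℕ,
    (Nat.card (Gnet q g).edgeSet : ℚ) = (((q : ℚ) + 1) * ((q : ℚ) + 2) / 2) ^ (g + 1)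
  | 0 => by
    have h1 : Nat.card (Gnet q 0).edgeSet = (q + 2).choose 2 := by
      classical
      show Nat.card (⊤ : SimpleGraph (Fin (q + 2))).edgeSet = (q + 2).choose 2
      rw [Nat.card_eq_fintype_card, ← SimpleGraph.edgeFinset_card,
        SimpleGraph.card_edgeFinset_top_eq_card_choose_two, Fintype.card_fin]
    have hdvd : 2 ∣ (q + 2) * (q + 1) := by
      rcases Nat.even_or_odd q with h | h
      · obtain ⟨k, hk⟩ := h; exact ⟨(k + 1) * (q + 1), by subst hk; ring⟩
      · obtain ⟨k, hk⟩ := h; exact ⟨(q + 2) * (k + 1), by subst hk; ring⟩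
    have h3 : 2 * (q + 2).choose 2 = (q + 2) * (q + 1) := by
      rw [Nat.choose_two_right, show q + 2 - 1 = q + 1 from rfl]
      exact Nat.mul_div_cancel' hdvd
    have h4 : ((2 * (q + 2).choose 2 : ℕ) : ℚ) = (((q + 2) * (q + 1) : ℕ) : ℚ) := by rw [h3]
    push_cast at h4
    rw [h1]
    rw [pow_one]
    linarith
  | g + 1 => by
    have h := corona_edge_count_q (Gnet q g) q
    have : (Nat.card (Gnet q (g + 1)).edgeSet : ℚ) =
        ((q : ℚ) + 1) * ((q : ℚ) + 2) / 2 * Nat.card (Gnet q g).edgeSet := h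
    rw [this, M_formula q g]
    ring

lemma N_step (q g : ℕ) :
    (Nat.card (GVert q (g + 1)) : ℚ) =
      Nat.card (GVert q g) + q * Nat.card (Gnet q g).edgeSet := by
  have : Nat.card (GVert q (g + 1)) =
      Nat.card (GVert q g) + Nat.card (Gnet q g).edgeSet * q := by
    rw [show (GVert q (g + 1)) = ((Gaux q g).1 ⊕ ((Gaux q g).2.edgeSet × Fin q)) from rfl,
      Nat.card_sum, Nat.card_prod, Nat.card_eq_fintype_card (α := Fin q), Fintype.card_fin]
  rw [this]
  push_cast
  ring

/-- The number of nodes of `G_q(g)` is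
`N_{g,q} = (2/(q+3)) · ((q+1)(q+2)/2)^{g+1} + 2(q+2)/(q+3)`. -/
theorem node_count (q g : ℕ) (hq : 1 ≤ q) :
    (Nat.card (GVert q g) : ℚ) =
      2 / (q + 3) * (((q : ℚ) + 1) * ((q : ℚ) + 2) / 2) ^ (g + 1)
        + 2 * ((q : ℚ) + 2) / ((q : ℚ) + 3) := by
  have hq3 : ((q : ℚ) + 3) ≠ 0 := by positivity
  induction g with
  | zero =>
    have : Nat.card (GVert q 0) = q + 2 := by
      rw [show GVert q 0 = Fin (q + 2) from rfl, Nat.card_eq_fintype_card, Fintype.card_fin]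
    rw [this]
    push_cast
    field_simp
    ring
  | succ g ih =>
    rw [N_step, ih, M_formula]
    field_simp
    ring
end

section
/- If the sequences N_g and M_g satisfy N_0 = q+2, M_0 = (q+1)(q+2)/2, M_{g+1} = ((q+1)(q+2)/2)·M_g, and N_{g+1} = q·M_g + N_g, then the average degree 2M_g/N_g tends to q+3 as g → ∞. -/
/-- If `N₀ = q+2`, `M₀ = (q+1)(q+2)/2`, `M_{g+1} = ((q+1)(q+2)/2)·M_g` and
`N_{g+1} = q·M_g + N_g`, then the average degree `2M_g/N_g → q+3` as `g → ∞`. -/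
theorem average_degree_tendsto (q : ℕ) (hq : 1 ≤ q) (N M : ℕ → ℝ)
    (hN0 : N 0 = (q : ℝ) + 2)
    (hM0 : M 0 = ((q : ℝ) + 1) * ((q : ℝ) + 2) / 2)
    (hM : ∀ g, M (g + 1) = (((q : ℝ) + 1) * ((q : ℝ) + 2) / 2) * M g)
    (hN : ∀ g, N (g + 1) = (q : ℝ) * M g + N g) :
    Filter.Tendsto (fun g => 2 * M g / N g) Filter.atTop (nhds ((q : ℝ) + 3)) := by
  set r : ℝ := ((q : ℝ) + 1) * ((q : ℝ) + 2) / 2 with hr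
  have hq1 : (1 : ℝ) ≤ (q : ℝ) := by exact_mod_cast hq
  have hr3 : (3 : ℝ) ≤ r := by rw [hr]; nlinarith
  have hr1 : (1 : ℝ) < r := by linarith
  have hMf : ∀ g, M g = r ^ (g + 1) := by
    intro g
    induction g with
    | zero => simpa using hM0
    | succ g ih => rw [hM g, ih]; ring
  have hMpos : ∀ g, 1 ≤ M g := by
    intro g; rw [hMf g]; exact one_le_pow₀ hr1.le
  have hq3 : (0 : ℝ) < (q : ℝ) + 3 := by linarith
  have hNf : ∀ g, N g = 2 / ((q : ℝ) + 3) * (M g + ((q : ℝ) + 2)) := by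
    intro g
    induction g with
    | zero => rw [hN0, hM0]; field_simp; ring
    | succ g ih =>
      rw [hN g, hM g, ih]; field_simp; ring
  have hden : ∀ g, M g + ((q : ℝ) + 2) ≠ 0 := by
    intro g; have := hMpos g; positivity
  have key : (fun g => 2 * M g / N g)
      = fun g => ((q : ℝ) + 3) * (1 - ((q : ℝ) + 2) / (M g + ((q : ℝ) + 2))) := by
    funext g
    rw [hNf g]
    field_simp [hden g, hq3.ne']
    ring
  rw [key]
  have h1 : Filter.Tendsto (fun g => M g + ((q : ℝ) + 2)) Filter.atTop Filter.atTop := by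
    have : Filter.Tendsto (fun g : ℕ => r ^ (g + 1)) Filter.atTop Filter.atTop :=
      (tendsto_pow_atTop_atTop_of_one_lt hr1).comp (Filter.tendsto_add_atTop_nat 1)
    have h2 : Filter.Tendsto (fun g => M g) Filter.atTop Filter.atTop := by
      simpa [funext hMf] using this
    exact Filter.tendsto_atTop_add_const_right _ _ h2
  have h0 : Filter.Tendsto (fun g => ((q : ℝ) + 2) / (M g + ((q : ℝ) + 2)))
      Filter.atTop (nhds 0) := Filter.Tendsto.div_atTop tendsto_const_nhds h1
  have hone : Filter.Tendsto (fun _ : ℕ => (1 : ℝ)) Filter.atTop (nhds 1) :=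
    tendsto_const_nhds
  have := (hone.sub h0).const_mul ((q : ℝ) + 3)
  simpa using this
end

section
/- The domination number of G_q(1) equals q+1, and every (q+1)-element subset of the set of q+2 hub nodes (the vertices of the initial complete graph K_{q+2}) is a minimum dominating set of G_q(1). -/
/-- `D` is a dominating set: every vertex not in `D` has a neighbor in `D`. -/
def IsDominatingSet {V : Type} (G : SimpleGraph V) (D : Finset V) : Prop :=
  ∀ v ∉ D, ∃ u ∈ D, G.Adj u v

/-- The domination number: the least cardinality of a dominating set. -/
noncomputable def domNum {V : Type} (G : SimpleGraph V) : ℕ :=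
  sInf {n | ∃ D : Finset V, IsDominatingSet G D ∧ D.card = n}

instance GVert0Fintype (q : ℕ) : Fintype (GVert q 0) :=
  inferInstanceAs (Fintype (Fin (q + 2)))

instance GVert0DecEq (q : ℕ) : DecidableEq (GVert q 0) :=
  inferInstanceAs (DecidableEq (Fin (q + 2)))

instance GVert1DecEq (q : ℕ) : DecidableEq (GVert q 1) :=
  inferInstanceAs (DecidableEq ((GVert q 0) ⊕ ((Gnet q 0).edgeSet × Fin q)))

lemma hub_one_inj (q : ℕ) : Function.Injective (hub q 1) := by
  intro a b h
  exact Sum.inl_injective h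

lemma hub_dom (q : ℕ) (hq : 1 ≤ q) (D : Finset (GVert q 1))
    (hsub : (D : Set (GVert q 1)) ⊆ Set.range (hub q 1)) (hcard : D.card = q + 1) :
    IsDominatingSet (Gnet q 1) D := by
  have hmem : ∀ x ∈ D, ∃ k : Fin (q + 2), x = Sum.inl k := by
    intro x hx
    obtain ⟨k, hk⟩ := hsub hx
    exact ⟨k, hk.symm⟩
  intro v hv
  rcases v with u | ⟨e, i⟩
  · have h1 : 1 < D.card := by omega
    obtain ⟨w, hw, hne⟩ := Finset.exists_mem_ne h1 (Sum.inl u)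
    obtain ⟨k, rfl⟩ := hmem w hw
    refine ⟨Sum.inl k, hw, ?_⟩
    show (⊤ : SimpleGraph (Fin (q + 2))).Adj k u
    erw [SimpleGraph.top_adj]
    intro h; exact hne (by subst h; rfl)
  · obtain ⟨s, hs⟩ := e
    induction s using Sym2.ind with
    | _ a b =>
      have hab : a ≠ b := (SimpleGraph.mem_edgeSet _).mp hs |>.ne
      have hcase : (Sum.inl a : GVert q 1) ∈ D ∨ (Sum.inl b : GVert q 1) ∈ D := by
        by_contra hc
        push_neg at hc
        have hDsub : D ⊆ ((Finset.univ.image (fun k : Fin (q + 2) =>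
            (Sum.inl k : GVert q 1))).erase (Sum.inl a)).erase (Sum.inl b) := by
          intro x hx
          obtain ⟨k, rfl⟩ := hmem x hx
          refine Finset.mem_erase.mpr ⟨?_, Finset.mem_erase.mpr ⟨?_, ?_⟩⟩
          · intro h; exact hc.2 (h ▸ hx)
          · intro h; exact hc.1 (h ▸ hx)
          · exact Finset.mem_image.mpr ⟨k, Finset.mem_univ _, rfl⟩
        have hcard2 := Finset.card_le_card hDsub
        have h3 : (Finset.univ.image (fun k : Fin (q + 2) =>
            (Sum.inl k : GVert q 1))).card = q + 2 := by
          erw [Finset.card_image_of_injective _ Sum.inl_injective, Finset.card_univ, Fintype.card_fin]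
        have h4 : (Sum.inl a : GVert q 1) ∈ (Finset.univ.image (fun k : Fin (q + 2) =>
            (Sum.inl k : GVert q 1))) := Finset.mem_image.mpr ⟨a, Finset.mem_univ _, rfl⟩
        have h5 : (Sum.inl b : GVert q 1) ∈ ((Finset.univ.image (fun k : Fin (q + 2) =>
            (Sum.inl k : GVert q 1))).erase (Sum.inl a)) :=
          Finset.mem_erase.mpr ⟨fun h => hab (Sum.inl_injective h).symm,
            Finset.mem_image.mpr ⟨b, Finset.mem_univ _, rfl⟩⟩
        erw [Finset.card_erase_of_mem h5, Finset.card_erase_of_mem h4, h3] at hcard2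
        omega
      rcases hcase with h | h
      · refine ⟨Sum.inl a, h, ?_⟩
        show a ∈ s(a, b)
        simp
      · refine ⟨Sum.inl b, h, ?_⟩
        show b ∈ s(a, b)
        simp

lemma dom_lower (q : ℕ) (hq : 1 ≤ q) (D : Finset (GVert q 1))
    (hD : IsDominatingSet (Gnet q 1) D) : q + 1 ≤ D.card := by
  classical
  set A : Finset (Fin (q + 2)) :=
    Finset.univ.filter (fun k => (Sum.inl k : GVert q 1) ∈ D) with hAdef
  have hAsub : A.image (fun k => (Sum.inl k : GVert q 1)) ⊆ D := by
    intro x hx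
    obtain ⟨k, hk, rfl⟩ := Finset.mem_image.mp hx
    exact (Finset.mem_filter.mp hk).2
  by_cases hAc : q + 1 ≤ A.card
  · calc q + 1 ≤ A.card := hAc
      _ = (A.image (fun k => (Sum.inl k : GVert q 1))).card :=
        (Finset.card_image_of_injective _ Sum.inl_injective).symm
      _ ≤ D.card := Finset.card_le_card hAsub
  · push_neg at hAc
    set M : Finset (Fin (q + 2)) := Aᶜ with hMdef
    have hMc : M.card = q + 2 - A.card := by
      simp only [hMdef, Finset.card_compl, Fintype.card_fin]
    have hAle : A.card ≤ q + 2 := by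
      have := Finset.card_le_univ A
      simpa using this
    have hM : A.card + M.card = q + 2 := by omega
    have hMpos : 0 < M.card := by omega
    obtain ⟨b, hb⟩ := Finset.card_pos.mp hMpos
    have key : ∀ x : Fin (q + 2), ∃ v : GVert q 1, x ∈ M.erase b →
        v ∈ D ∧ ∃ p : (Gnet q 0).edgeSet × Fin q,
        v = Sum.inr p ∧ (p.1 : Sym2 (GVert q 0)) = s(b, x) := by
      intro x
      by_cases hx : x ∈ M.erase b
      swap
      · exact ⟨Sum.inl b, fun h => absurd h hx⟩
      obtain ⟨hxb, hxM⟩ := Finset.mem_erase.mp hx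
      have hbx : b ≠ x := fun h => hxb h.symm
      have hedge : s(b, x) ∈ (Gnet q 0).edgeSet := by
        show s(b, x) ∈ (⊤ : SimpleGraph (Fin (q + 2))).edgeSet
        simp [hbx]
      set e : (Gnet q 0).edgeSet := ⟨s(b, x), hedge⟩ with hedef
      set i0 : Fin q := ⟨0, hq⟩
      by_cases hv0 : (Sum.inr (e, i0) : GVert q 1) ∈ D
      · exact ⟨_, fun _ => ⟨hv0, (e, i0), rfl, rfl⟩⟩
      · obtain ⟨u, hu, hadj⟩ := hD _ hv0
        rcases u with w | p
        · exfalso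
          have hw : w ∈ (e : Sym2 (GVert q 0)) := hadj
          have : w = b ∨ w = x := by
            rw [hedef] at hw; exact Sym2.mem_iff.mp hw
          have hwA : w ∈ A := Finset.mem_filter.mpr ⟨Finset.mem_univ _, hu⟩
          rcases this with rfl | rfl
          · exact (Finset.mem_compl.mp hb) hwA
          · exact (Finset.mem_compl.mp hxM) hwA
        · have hpe : p.1 = e ∧ p.2 ≠ i0 := hadj
          exact ⟨_, fun _ => ⟨hu, p, rfl, by rw [hpe.1]; rfl⟩⟩
    choose f hf using key
    have hfD : ∀ x ∈ M.erase b, f x ∈ D := fun x hx => (hf x hx).1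
    have hfg : ∀ x ∈ M.erase b, ∃ p : (Gnet q 0).edgeSet × Fin q,
        f x = Sum.inr p ∧ (p.1 : Sym2 (GVert q 0)) = s(b, x) := fun x hx => (hf x hx).2
    have hinj : Set.InjOn f ((M.erase b : Finset (Fin (q + 2))) : Set (Fin (q + 2))) := by
      intro x hx y hy hxy
      simp only [Finset.coe_erase, Set.mem_diff, Finset.mem_coe] at hx hy
      have hx' : x ∈ M.erase b := Finset.mem_erase.mpr ⟨by simpa using hx.2, hx.1⟩
      have hy' : y ∈ M.erase b := Finset.mem_erase.mpr ⟨by simpa using hy.2, hy.1⟩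
      obtain ⟨px, hpx, hpx2⟩ := hfg x hx'
      obtain ⟨py, hpy, hpy2⟩ := hfg y hy'
      rw [hpx, hpy] at hxy
      have hpp : px = py := Sum.inr_injective hxy
      have hss : s(b, x) = s(b, y) := by
        rw [← hpx2, ← hpy2, hpp]
      rcases Sym2.eq_iff.mp hss with ⟨_, h⟩ | ⟨h1, h2⟩
      · exact h
      · exfalso
        exact (Finset.mem_erase.mp hy').1 h1.symm
    have hBsub : (M.erase b).image f ⊆ D := by
      intro x hx
      obtain ⟨k, hk, rfl⟩ := Finset.mem_image.mp hx
      exact hfD k hk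
    have hBcard : ((M.erase b).image f).card = M.card - 1 := by
      rw [Finset.card_image_of_injOn hinj, Finset.card_erase_of_mem hb]
    have hdisj : Disjoint (A.image (fun k => (Sum.inl k : GVert q 1)))
        ((M.erase b).image f) := by
      rw [Finset.disjoint_left]
      intro x hx hx'
      obtain ⟨k, _, rfl⟩ := Finset.mem_image.mp hx
      obtain ⟨m, hm, hfm⟩ := Finset.mem_image.mp hx'
      obtain ⟨p, hp, _⟩ := hfg m hm
      rw [hp] at hfm
      exact Sum.inl_ne_inr hfm.symm
    have hunion : (A.image (fun k => (Sum.inl k : GVert q 1))) ∪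
        ((M.erase b).image f) ⊆ D := Finset.union_subset hAsub hBsub
    have := Finset.card_le_card hunion
    have hu := Finset.card_union_of_disjoint hdisj
    have hAi : (A.image (fun k => (Sum.inl k : GVert q 1))).card = A.card :=
      Finset.card_image_of_injective _ Sum.inl_injective
    refine le_trans ?_ this
    refine le_of_le_of_eq ?_ hu.symm
    refine le_of_le_of_eq ?_ (congrArg₂ (· + ·) hAi hBcard).symm
    omega

/-- The domination number of `G_q(1)` is `q+1`, and every `(q+1)`-element subset
of the hub node set is a minimum dominating set of `G_q(1)`. -/
theorem domNum_Gnet_one (q : ℕ) (hq : 1 ≤ q) :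
    domNum (Gnet q 1) = q + 1 ∧
    ∀ D : Finset (GVert q 1), (D : Set (GVert q 1)) ⊆ Set.range (hub q 1) →
      D.card = q + 1 → IsDominatingSet (Gnet q 1) D ∧ D.card = domNum (Gnet q 1) := by
  classical
  have hD0 : ∃ D0 : Finset (GVert q 1), (↑D0 : Set (GVert q 1)) ⊆ Set.range (hub q 1) ∧
      D0.card = q + 1 := by
    refine ⟨(Finset.univ.erase (0 : Fin (q + 2))).image (hub q 1), ?_, ?_⟩
    · intro x hx
      simp only [Finset.coe_image, Set.mem_image] at hx
      obtain ⟨k, _, rfl⟩ := hx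
      exact Set.mem_range_self k
    · rw [Finset.card_image_of_injective _ (hub_one_inj q),
        Finset.card_erase_of_mem (Finset.mem_univ _), Finset.card_univ, Fintype.card_fin]
      omega
  obtain ⟨D0, hD0sub, hD0card⟩ := hD0
  have hmem : q + 1 ∈ {n | ∃ D : Finset (GVert q 1), IsDominatingSet (Gnet q 1) D ∧ D.card = n} :=
    ⟨D0, hub_dom q hq D0 hD0sub hD0card, hD0card⟩
  have heq : domNum (Gnet q 1) = q + 1 := by
    refine le_antisymm (Nat.sInf_le hmem) (le_csInf ⟨q + 1, hmem⟩ ?_)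
    rintro n ⟨D, hDdom, rfl⟩
    exact dom_lower q hq D hDdom
  refine ⟨heq, fun D hsub hcard => ⟨hub_dom q hq D hsub hcard, by rw [heq, hcard]⟩⟩
end

section
/- For all g ≥ 0 and q ≥ 1, the chromatic polynomial of G_q(g) is P(G_q(g), λ) = λ(λ−1) · ∏_{i=2}^{q+1} (λ−i)^{E(g,q)}, where E(g,q) = (2/(q(q+3))) · ((q+1)(q+2)/2)^{g+1} − 2/(q(q+3)). -/
/-- The exponent `E(g,q) = (2/(q(q+3))) · ((q+1)(q+2)/2)^{g+1} − 2/(q(q+3))`,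
a natural number (the division is exact). -/
def expE (q g : ℕ) : ℕ :=
  (2 * (((q + 1) * (q + 2) / 2) ^ (g + 1) - 1)) / (q * (q + 3))

/-! ### Auxiliary arithmetic lemmas -/

lemma geom_nat (s : ℕ) (hs : 1 ≤ s) (k : ℕ) :
    (s - 1) * ∑ i ∈ Finset.range k, s ^ i = s ^ k - 1 := by
  induction k with
  | zero => simp
  | succ k ih =>
    rw [Finset.sum_range_succ, Nat.mul_add, ih, Nat.sub_mul, one_mul]
    have h3 : s * s ^ k = s ^ (k + 1) := by rw [pow_succ, mul_comm]
    have h1 : 1 ≤ s ^ k := Nat.one_le_pow _ _ hs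
    have h2 : s ^ k ≤ s ^ (k + 1) := Nat.pow_le_pow_right hs (Nat.le_succ k)
    omega

lemma two_mul_s (q : ℕ) : 2 * ((q + 1) * (q + 2) / 2) = (q + 1) * (q + 2) :=
  Nat.mul_div_cancel' (even_iff_two_dvd.mp (Nat.even_mul_succ_self (q + 1)))

lemma expE_eq_sum (q : ℕ) (hq : 1 ≤ q) (g : ℕ) :
    expE q g = ∑ i ∈ Finset.range (g + 1), ((q + 1) * (q + 2) / 2) ^ i := by
  set s := (q + 1) * (q + 2) / 2 with hsdef
  have h2s : 2 * s = (q + 1) * (q + 2) := two_mul_s q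
  have hs1 : 1 ≤ s := by nlinarith
  have hkey : 2 * (s ^ (g + 1) - 1) = (q * (q + 3)) * ∑ i ∈ Finset.range (g + 1), s ^ i := by
    rw [← geom_nat s hs1 (g + 1), ← mul_assoc]
    congr 1
    have : (q + 1) * (q + 2) = q * (q + 3) + 2 := by ring
    omega
  rw [expE, hkey, Nat.mul_div_cancel_left]
  positivity

lemma expE_zero (q : ℕ) (hq : 1 ≤ q) : expE q 0 = 1 := by
  rw [expE_eq_sum q hq 0]; simp

lemma expE_succ (q : ℕ) (hq : 1 ≤ q) (g : ℕ) :
    expE q (g + 1) = expE q g + ((q + 1) * (q + 2) / 2) ^ (g + 1) := by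
  rw [expE_eq_sum q hq, expE_eq_sum q hq, Finset.sum_range_succ]

lemma descFactorial_cast_prod (n k : ℕ) :
    (n.descFactorial k : ℤ) = ∏ i ∈ Finset.range k, ((n : ℤ) - i) := by
  induction k with
  | zero => simp
  | succ k ih =>
    rw [Finset.prod_range_succ, ← ih, Nat.descFactorial_succ]
    rcases le_or_gt k n with h | h
    · push_cast [h]; ring
    · simp [Nat.descFactorial_eq_zero_iff_lt.mpr h]

lemma desc_cast2 (n q : ℕ) (hn : 2 ≤ n) :
    (((n - 2).descFactorial q : ℕ) : ℤ) = ∏ i ∈ Finset.Icc 2 (q + 1), ((n : ℤ) - i) := by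
  rw [descFactorial_cast_prod, ← Finset.Ico_add_one_right_eq_Icc, Finset.prod_Ico_eq_prod_range,
    show q + 1 + 1 - 2 = q by omega]
  apply Finset.prod_congr rfl
  intro i _
  have h2 : ((n - 2 : ℕ) : ℤ) = (n : ℤ) - 2 := by omega
  rw [h2]; push_cast; ring

lemma prod_shift (n q : ℕ) :
    ∏ i ∈ Finset.range (q + 2), ((n : ℤ) - i) =
      (n : ℤ) * ((n : ℤ) - 1) * ∏ i ∈ Finset.Icc 2 (q + 1), ((n : ℤ) - i) := by
  rw [show q + 2 = 2 + q by ring, Finset.prod_range_add, ← Finset.Ico_add_one_right_eq_Icc,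
    Finset.prod_Ico_eq_prod_range, show q + 1 + 1 - 2 = q by omega]
  congr 1
  rw [Finset.prod_range_succ, Finset.prod_range_one]
  push_cast; ring

/-! ### Colorings of the complete graph -/

def topColoringEquiv (m n : ℕ) :
    (⊤ : SimpleGraph (Fin m)).Coloring (Fin n) ≃ (Fin m ↪ Fin n) where
  toFun C := ⟨C, fun a b h => by by_contra hne; exact C.valid hne h⟩
  invFun f := SimpleGraph.Coloring.mk f (fun {a b} h => f.injective.ne h)
  left_inv C := rfl
  right_inv f := rfl

lemma card_coloring_top (m n : ℕ) :
    Nat.card ((⊤ : SimpleGraph (Fin m)).Coloring (Fin n)) = n.descFactorial m := by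
  rw [Nat.card_congr (topColoringEquiv m n), Nat.card_eq_fintype_card,
    Fintype.card_embedding_eq, Fintype.card_fin, Fintype.card_fin]

/-! ### Colorings of the edge corona -/

section Corona

variable {V : Type} (G : SimpleGraph V) (q n : ℕ)

def coronaColoringEquiv :
    (edgeCorona G q).Coloring (Fin n) ≃
      Σ c : G.Coloring (Fin n),
        Π e : G.edgeSet, (Fin q ↪ {x : Fin n // ∀ v ∈ (e : Sym2 V), x ≠ c v}) where
  toFun C :=
    ⟨SimpleGraph.Coloring.mk (fun v => C (Sum.inl v))
        (fun {a b} h => C.valid (show (edgeCorona G q).Adj (Sum.inl a) (Sum.inl b) from h)),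
     fun e => ⟨fun j => ⟨C (Sum.inr (e, j)), fun v hv =>
        C.valid (show (edgeCorona G q).Adj (Sum.inr (e, j)) (Sum.inl v) from hv)⟩,
      fun j k hjk => by
        by_contra hne
        exact C.valid (show (edgeCorona G q).Adj (Sum.inr (e, j)) (Sum.inr (e, k)) from ⟨rfl, hne⟩)
          (congrArg Subtype.val hjk)⟩⟩
  invFun P := SimpleGraph.Coloring.mk
    (Sum.elim P.1 (fun p => (P.2 p.1 p.2 : {x : Fin n // ∀ v ∈ (p.1 : Sym2 V), x ≠ P.1 v}).1))
    (by
      rintro (u | p) (v | r) h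
      · exact P.1.valid h
      · exact fun hc => ((P.2 r.1 r.2).2 u h) hc.symm
      · exact (P.2 p.1 p.2).2 v h
      · obtain ⟨h1, h2⟩ := h
        obtain ⟨e1, j1⟩ := p
        obtain ⟨e2, j2⟩ := r
        simp only at h1 h2 ⊢
        subst h1
        intro hc
        exact h2 ((P.2 e1).injective (Subtype.ext hc)))
  left_inv C := DFunLike.ext _ _ (by rintro (v | p) <;> rfl)
  right_inv P := rfl

lemma card_subtype_avoid (c : G.Coloring (Fin n)) (e : G.edgeSet) :
    Nat.card {x : Fin n // ∀ v ∈ (e : Sym2 V), x ≠ c v} = n - 2 := by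
  classical
  obtain ⟨e, he⟩ := e
  induction e using Sym2.inductionOn with
  | hf a b =>
    rw [SimpleGraph.mem_edgeSet] at he
    have hab : c a ≠ c b := c.valid he
    have : {x : Fin n // ∀ v ∈ (s(a, b) : Sym2 V), x ≠ c v} ≃
        {x : Fin n // x ∉ ({c a, c b} : Finset (Fin n))} := by
      apply Equiv.subtypeEquivRight
      intro x
      simp [Sym2.mem_iff, or_imp, forall_and, not_or]
    rw [Nat.card_congr this, Nat.card_eq_fintype_card, Fintype.card_subtype_compl]
    congr 1
    · exact Fintype.card_fin n
    · rw [Fintype.card_coe]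
      exact Finset.card_pair hab

lemma card_coronaColoring [Fintype V] :
    Nat.card ((edgeCorona G q).Coloring (Fin n)) =
      Nat.card (G.Coloring (Fin n)) * ((n - 2).descFactorial q) ^ (Nat.card G.edgeSet) := by
  classical
  rw [Nat.card_congr (coronaColoringEquiv G q n)]
  rw [Nat.card_eq_fintype_card, Fintype.card_sigma]
  have key : ∀ c : G.Coloring (Fin n),
      Fintype.card (Π e : G.edgeSet, (Fin q ↪ {x : Fin n // ∀ v ∈ (e : Sym2 V), x ≠ c v})) =
        ((n - 2).descFactorial q) ^ (Nat.card G.edgeSet) := by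
    intro c
    rw [Fintype.card_pi]
    have : ∀ e : G.edgeSet,
        Fintype.card (Fin q ↪ {x : Fin n // ∀ v ∈ (e : Sym2 V), x ≠ c v}) =
          (n - 2).descFactorial q := by
      intro e
      rw [Fintype.card_embedding_eq, Fintype.card_fin, ← Nat.card_eq_fintype_card,
        card_subtype_avoid G n c e]
    rw [Finset.prod_congr rfl (fun e _ => this e), Finset.prod_const, Finset.card_univ,
      Nat.card_eq_fintype_card]
  rw [Finset.sum_congr rfl (fun c _ => key c), Finset.sum_const, Finset.card_univ, smul_eq_mul]
  simp [Nat.card_eq_fintype_card]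

/-! ### Edge count of the edge corona -/

def coronaNeighborInl (v : V) :
    (edgeCorona G q).neighborSet (Sum.inl v) ≃
      (G.neighborSet v ⊕ ({e : G.edgeSet // v ∈ (e : Sym2 V)} × Fin q)) where
  toFun := fun x => match x with
    | ⟨Sum.inl u, h⟩ => Sum.inl ⟨u, h⟩
    | ⟨Sum.inr p, h⟩ => Sum.inr (⟨p.1, h⟩, p.2)
  invFun := fun x => match x with
    | Sum.inl ⟨u, h⟩ => ⟨Sum.inl u, h⟩
    | Sum.inr (⟨e, h⟩, j) => ⟨Sum.inr (e, j), h⟩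
  left_inv := by rintro ⟨u | ⟨e, j⟩, h⟩ <;> rfl
  right_inv := by rintro (⟨u, h⟩ | ⟨⟨e, h⟩, j⟩) <;> rfl

def coronaNeighborInr (e : G.edgeSet) (j : Fin q) :
    (edgeCorona G q).neighborSet (Sum.inr (e, j)) ≃
      ({u : V // u ∈ (e : Sym2 V)} ⊕ {k : Fin q // k ≠ j}) where
  toFun := fun x => match x with
    | ⟨Sum.inl u, h⟩ => Sum.inl ⟨u, h⟩
    | ⟨Sum.inr p, h⟩ => Sum.inr ⟨p.2, fun hk => h.2 hk.symm⟩
  invFun := fun x => match x with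
    | Sum.inl ⟨u, h⟩ => ⟨Sum.inl u, h⟩
    | Sum.inr ⟨k, hk⟩ => ⟨Sum.inr (e, k), ⟨rfl, fun h => hk h.symm⟩⟩
  left_inv := by
    rintro ⟨u | ⟨e', j'⟩, h⟩
    · rfl
    · obtain ⟨h1, h2⟩ := h
      cases h1
      rfl
  right_inv := by rintro (⟨u, h⟩ | ⟨k, hk⟩) <;> rfl

lemma card_mem_edge (e : G.edgeSet) : Nat.card {u : V // u ∈ (e : Sym2 V)} = 2 := by
  classical
  obtain ⟨e, he⟩ := e
  induction e using Sym2.inductionOn with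
  | hf a b =>
    rw [SimpleGraph.mem_edgeSet] at he
    have : {u : V // u ∈ (s(a, b) : Sym2 V)} ≃ {u : V // u ∈ ({a, b} : Finset V)} := by
      apply Equiv.subtypeEquivRight
      intro x; simp [Sym2.mem_iff]
    rw [Nat.card_congr this, Nat.card_eq_fintype_card, Fintype.card_coe]
    exact Finset.card_pair he.ne

lemma card_incident (v : V) :
    Nat.card {e : G.edgeSet // v ∈ (e : Sym2 V)} = Nat.card (G.neighborSet v) := by
  classical
  have e1 : {e : G.edgeSet // v ∈ (e : Sym2 V)} ≃ G.incidenceSet v :=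
    { toFun := fun x => ⟨x.1.1, x.1.2, x.2⟩
      invFun := fun x => ⟨⟨x.1, x.2.1⟩, x.2.2⟩
      left_inv := fun x => rfl
      right_inv := fun x => rfl }
  rw [Nat.card_congr e1, Nat.card_congr (G.incidenceSetEquivNeighborSet v)]

lemma card_coronaEdgeSet [Fintype V] (hq : 1 ≤ q) :
    2 * Nat.card (edgeCorona G q).edgeSet = Nat.card G.edgeSet * ((q + 1) * (q + 2)) := by
  classical
  letI : Fintype G.edgeSet := Fintype.ofFinite _
  letI : Fintype (edgeCorona G q).edgeSet := Fintype.ofFinite _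
  have hs := SimpleGraph.sum_degrees_eq_twice_card_edges (edgeCorona G q)
  have dinl : ∀ v : V, (edgeCorona G q).degree (Sum.inl v) = (q + 1) * G.degree v := by
    intro v
    have h1 : Nat.card ((edgeCorona G q).neighborSet (Sum.inl v)) =
        (q + 1) * Nat.card (G.neighborSet v) := by
      rw [Nat.card_congr (coronaNeighborInl G q v), Nat.card_sum, Nat.card_prod, card_incident,
        Nat.card_eq_fintype_card (α := Fin q), Fintype.card_fin]
      ring
    rwa [Nat.card_eq_fintype_card, Nat.card_eq_fintype_card,
      SimpleGraph.card_neighborSet_eq_degree, SimpleGraph.card_neighborSet_eq_degree] at h1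
  have dinr : ∀ p : G.edgeSet × Fin q, (edgeCorona G q).degree (Sum.inr p) = q + 1 := by
    rintro ⟨e, j⟩
    have h1 : Nat.card ((edgeCorona G q).neighborSet (Sum.inr (e, j))) = q + 1 := by
      rw [Nat.card_congr (coronaNeighborInr G q e j), Nat.card_sum, card_mem_edge]
      have h2 : Nat.card {k : Fin q // k ≠ j} = q - 1 := by
        rw [Nat.card_eq_fintype_card, Fintype.card_subtype_compl, Fintype.card_subtype_eq,
          Fintype.card_fin]
      rw [h2]; omega
    rwa [Nat.card_eq_fintype_card, SimpleGraph.card_neighborSet_eq_degree] at h1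
  rw [Fintype.sum_sum_type, Finset.sum_congr rfl (fun v _ => dinl v),
    Finset.sum_congr rfl (fun p _ => dinr p), ← Finset.mul_sum,
    SimpleGraph.sum_degrees_eq_twice_card_edges G, Finset.sum_const, Finset.card_univ,
    Fintype.card_prod, Fintype.card_fin, smul_eq_mul] at hs
  simp only [SimpleGraph.edgeFinset_card, ← Nat.card_eq_fintype_card] at hs
  rw [← hs]
  ring

end Corona

/-! ### The network `G_q(g)` -/

instance instFiniteGVert (q : ℕ) : ∀ g, Finite (GVert q g)
  | 0 => inferInstanceAs (Finite (Fin (q + 2)))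
  | g + 1 => by
    haveI := instFiniteGVert q g
    exact inferInstanceAs (Finite ((GVert q g) ⊕ ((Gnet q g).edgeSet × Fin q)))

lemma hub_adj (q : ℕ) : ∀ g, (Gnet q g).Adj (hub q g 0) (hub q g 1)
  | 0 => by
    show (0 : Fin (q + 2)) ≠ 1
    exact zero_ne_one
  | g + 1 => hub_adj q g

lemma card_edge_Gnet (q : ℕ) (hq : 1 ≤ q) (g : ℕ) :
    Nat.card (Gnet q g).edgeSet = ((q + 1) * (q + 2) / 2) ^ (g + 1) := by
  induction g with
  | zero =>
    classical
    have h : Nat.card ((⊤ : SimpleGraph (Fin (q + 2))).edgeSet) =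
        ((q + 1) * (q + 2) / 2) ^ 1 := by
      rw [Nat.card_eq_fintype_card, ← SimpleGraph.edgeFinset_card,
        SimpleGraph.card_edgeFinset_top_eq_card_choose_two, Fintype.card_fin,
        Nat.choose_two_right, pow_one]
      have h1 : q + 2 - 1 = q + 1 := rfl
      rw [h1, Nat.mul_comm]
    exact h
  | succ g ih =>
    letI : Fintype (GVert q g) := Fintype.ofFinite _
    have h := card_coronaEdgeSet (Gnet q g) q hq
    have h2s := two_mul_s q
    set s := (q + 1) * (q + 2) / 2 with hsdef
    have h2 : 2 * Nat.card (edgeCorona (Gnet q g) q).edgeSet = 2 * (s ^ (g + 1 + 1)) := by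
      rw [h, ih, ← h2s]
      ring
    have h3 : Nat.card (Gnet q (g + 1)).edgeSet =
        Nat.card (edgeCorona (Gnet q g) q).edgeSet := rfl
    omega

/-- For all `g ≥ 0`, `q ≥ 1` and every number `n` of colors, the number of proper
colorings of `G_q(g)` with `n` colors is
`P(G_q(g), n) = n(n−1) · ∏_{i=2}^{q+1} (n−i)^{E(g,q)}`. -/
theorem chromaticPolynomial_Gnet (q g : ℕ) (hq : 1 ≤ q) (n : ℕ) :
    (Nat.card ((Gnet q g).Coloring (Fin n)) : ℤ) =
      (n : ℤ) * ((n : ℤ) - 1) *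
        ∏ i ∈ Finset.Icc 2 (q + 1), ((n : ℤ) - (i : ℤ)) ^ expE q g := by
  rcases Nat.lt_or_ge n 2 with hn | hn
  · haveI : IsEmpty ((Gnet q g).Coloring (Fin n)) := by
      constructor
      intro C
      have hv := C.valid (hub_adj q g)
      interval_cases n
      · exact (C (hub q g 0)).elim0
      · exact hv (Subsingleton.elim _ _)
    rw [Nat.card_of_isEmpty]
    interval_cases n <;> simp
  · induction g with
    | zero =>
      have h0 : (Nat.card ((Gnet q 0).Coloring (Fin n)) : ℤ) =
          ((n.descFactorial (q + 2) : ℕ) : ℤ) :=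
        congrArg Nat.cast (card_coloring_top (q + 2) n)
      rw [h0, descFactorial_cast_prod, prod_shift, expE_zero q hq]
      simp [pow_one]
    | succ g ih =>
      letI : Fintype (GVert q g) := Fintype.ofFinite _
      have hc : Nat.card ((Gnet q (g + 1)).Coloring (Fin n)) =
          Nat.card ((Gnet q g).Coloring (Fin n)) *
            ((n - 2).descFactorial q) ^ (Nat.card (Gnet q g).edgeSet) :=
        card_coronaColoring (Gnet q g) q n
      rw [hc, card_edge_Gnet q hq g]
      push_cast
      rw [ih, desc_cast2 n q hn, expE_succ q hq g]
      simp only [pow_add, Finset.prod_mul_distrib, Finset.prod_pow]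
      ring
end
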